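/- Let (S₁,·) and (S₂,·) be countable commutative semigroups and let A ⊆ S₁ and B ⊆ S₂ be C-sets. Then A × B is a C-set in the product semigroup S₁ × S₂ (with coordinatewise multiplication). -/

import Mathlib

/-- The product `∏_{t ∈ H} f t` over a nonempty finite set `H ⊆ ℕ` in a semigroup,
computed in increasing order of the indices (in a commutative semigroup the order
is immaterial). -/
def semigroupProd {S : Type*} [Semigroup S] (f : ℕ → S) (H : Finset ℕ) (hH : H.Nonempty) : S :=
  ((H.sort (· ≤ ·)).tail).foldl (fun x t => x * f t) (f (H.min' hH))

/-- A set `A` in a commutative semigroup `S` is a J-set if for every finite nonempty set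
`F` of sequences in `S` there are `a ∈ S` and a finite nonempty `H ⊆ ℕ` such that
`a * ∏_{t ∈ H} f t ∈ A` for every `f ∈ F`. -/
def IsJSet {S : Type*} [CommSemigroup S] (A : Set S) : Prop :=
  ∀ F : Finset (ℕ → S), F.Nonempty →
    ∃ a : S, ∃ H : Finset ℕ, ∃ hH : H.Nonempty,
      ∀ f ∈ F, a * semigroupProd f H hH ∈ A

/-- A set `A` in a countable (commutative) semigroup `S` is a C-set if there is a
decreasing sequence `⟨C_n⟩` of subsets of `A` such that (1) for each `n` and each
`x ∈ C_n` there is `m` with `C_m ⊆ x⁻¹C_n`, and (2) each `C_n` is a J-set. -/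
def IsCSet {S : Type*} [CommSemigroup S] (A : Set S) : Prop :=
  ∃ C : ℕ → Set S, (∀ n, C n ⊆ A) ∧ (∀ n, C (n + 1) ⊆ C n) ∧
    (∀ n, ∀ x ∈ C n, ∃ m, C m ⊆ {s : S | x * s ∈ C n}) ∧
    (∀ n, IsJSet (C n))

section Helpers
variable {S : Type*} [CommSemigroup S]

lemma csetAux_foldl_coe (f : ℕ → S) (l : List ℕ) (x : S) :
    ((l.foldl (fun x t => x * f t) x : S) : WithOne S)
      = (x : WithOne S) * (l.map fun t => (f t : WithOne S)).prod := by
  induction l generalizing x with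
  | nil => simp
  | cons a t ih => simp [ih, mul_assoc]

lemma coe_semigroupProd (f : ℕ → S) (H : Finset ℕ) (hH : H.Nonempty) :
    ((semigroupProd f H hH : S) : WithOne S) = ∏ t ∈ H, (f t : WithOne S) := by
  have hlen : 0 < (H.sort (· ≤ ·)).length := by
    rw [Finset.length_sort]; exact Finset.card_pos.2 hH
  obtain ⟨a, l, hl⟩ : ∃ a l, H.sort (· ≤ ·) = a :: l := by
    cases h : H.sort (· ≤ ·) with
    | nil => rw [h] at hlen; simp at hlen
    | cons a l => exact ⟨a, l, rfl⟩
  have ha : a = H.min' hH := by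
    have h2 := Finset.sorted_zero_eq_min' (s := H) (h := hlen)
    have h3 : (H.sort (· ≤ ·))[0]'hlen = a := by simp [hl]
    rw [h3] at h2; exact h2
  have hprod : ∏ t ∈ H, (f t : WithOne S)
      = ((H.sort (· ≤ ·)).map fun t => (f t : WithOne S)).prod := by
    rw [← Finset.prod_map_toList]
    exact (List.Perm.prod_eq ((Finset.sort_perm_toList (s := H) (r := (· ≤ ·))).map _)).symm
  rw [hprod, hl]
  simp only [semigroupProd, hl, List.tail_cons, csetAux_foldl_coe, List.map_cons,
    List.prod_cons, ha]

lemma semigroupProd_erase (f : ℕ → S) (K : Finset ℕ) (hK : K.Nonempty) {x : ℕ} (hx : x ∈ K)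
    (h' : (K.erase x).Nonempty) :
    semigroupProd f K hK = f x * semigroupProd f (K.erase x) h' := by
  rw [← WithOne.coe_inj, WithOne.coe_mul, coe_semigroupProd, coe_semigroupProd]
  exact (Finset.mul_prod_erase K _ hx).symm

lemma semigroupProd_singleton (f : ℕ → S) (x : ℕ) (h : Finset.Nonempty {x}) :
    semigroupProd f {x} h = f x := by
  rw [← WithOne.coe_inj, coe_semigroupProd]
  simp

lemma semigroupProd_shift (f : ℕ → S) (H : Finset ℕ) (hH : H.Nonempty) (c : ℕ)
    (h' : (H.image (· + c)).Nonempty) :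
    semigroupProd (fun t => f (t + c)) H hH = semigroupProd f (H.image (· + c)) h' := by
  rw [← WithOne.coe_inj, coe_semigroupProd, coe_semigroupProd]
  rw [Finset.prod_image (by intro x _ y _ h; simp only at h; omega)]

lemma semigroupProd_biUnion (f : ℕ → S) (K : Finset ℕ) (hK : K.Nonempty)
    (H : ℕ → Finset ℕ) (hne : ∀ j, (H j).Nonempty)
    (hdisj : (K : Set ℕ).PairwiseDisjoint H) (hbU : (K.biUnion H).Nonempty) :
    semigroupProd f (K.biUnion H) hbU
      = semigroupProd (fun j => semigroupProd f (H j) (hne j)) K hK := by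
  rw [← WithOne.coe_inj, coe_semigroupProd, coe_semigroupProd,
    Finset.prod_biUnion hdisj]
  exact Finset.prod_congr rfl fun j _ => (coe_semigroupProd f (H j) (hne j)).symm

lemma semigroupProd_mul (f g : ℕ → S) (K : Finset ℕ) (hK : K.Nonempty) :
    semigroupProd (fun j => f j * g j) K hK = semigroupProd f K hK * semigroupProd g K hK := by
  rw [← WithOne.coe_inj, WithOne.coe_mul, coe_semigroupProd, coe_semigroupProd,
    coe_semigroupProd, ← Finset.prod_mul_distrib]
  simp

lemma IsJSet.beyond {A : Set S} (hA : IsJSet A) (F : Finset (ℕ → S)) (hF : F.Nonempty)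
    (d : ℕ) :
    ∃ a : S, ∃ H : Finset ℕ, ∃ hH : H.Nonempty,
      (∀ t ∈ H, d < t) ∧ ∀ f ∈ F, a * semigroupProd f H hH ∈ A := by
  classical
  obtain ⟨a, H, hH, h⟩ := hA (F.image fun f => fun t => f (t + (d + 1))) (hF.image _)
  refine ⟨a, H.image (· + (d + 1)), hH.image _, ?_, ?_⟩
  · intro t ht
    simp only [Finset.mem_image] at ht
    obtain ⟨s, _, rfl⟩ := ht; omega
  · intro f hf
    rw [← semigroupProd_shift f H hH (d + 1) (hH.image _)]
    exact h _ (Finset.mem_image_of_mem _ hf)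

lemma csetAux_antitone {C : ℕ → Set S} (hdec : ∀ n, C (n + 1) ⊆ C n) :
    ∀ i j, i ≤ j → C j ⊆ C i := by
  intro i j h
  induction h with
  | refl => exact subset_rfl
  | step h ih => exact (hdec _).trans ih

end Helpers

section Chain

variable {S : Type*} [CommSemigroup S]

structure CSetAuxT (C : ℕ → Set S) (n : ℕ) (F : Finset (ℕ → S)) where
  a : S
  H : Finset ℕ
  hH : H.Nonempty
  m : ℕ
  B : ℕ
  hB : ∀ t ∈ H, t < B
  hnm : n ≤ m
  hmem : ∀ f ∈ F, a * semigroupProd f H hH ∈ C m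

def CSetAuxRel {C : ℕ → Set S} {n : ℕ} {F : Finset (ℕ → S)}
    (p q : CSetAuxT C n F) : Prop :=
  p.m ≤ q.m ∧ p.B ≤ q.B ∧ (∀ t ∈ q.H, p.B < t) ∧
    ∀ f ∈ F, ∀ s ∈ C q.m, (p.a * semigroupProd f p.H p.hH) * s ∈ C p.m

noncomputable def csetAuxChain {C : ℕ → Set S} {n : ℕ} {F : Finset (ℕ → S)}
    (b : CSetAuxT C n F) (hstep : ∀ p : CSetAuxT C n F, ∃ q, CSetAuxRel p q) :
    ℕ → CSetAuxT C n F :=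
  fun j => Nat.rec b (fun _ p => (hstep p).choose) j

lemma csetAuxChain_rel {C : ℕ → Set S} {n : ℕ} {F : Finset (ℕ → S)}
    (b : CSetAuxT C n F) (hstep : ∀ p : CSetAuxT C n F, ∃ q, CSetAuxRel p q) (j : ℕ) :
    CSetAuxRel (csetAuxChain b hstep j) (csetAuxChain b hstep (j + 1)) :=
  (hstep (csetAuxChain b hstep j)).choose_spec

lemma cset_star (C : ℕ → Set S)
    (hdec : ∀ n, C (n + 1) ⊆ C n)
    (hshift : ∀ n, ∀ x ∈ C n, ∃ m, C m ⊆ {s : S | x * s ∈ C n})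
    (hJ : ∀ n, IsJSet (C n)) (n : ℕ) (F : Finset (ℕ → S)) (hF : F.Nonempty) :
    ∃ (a : ℕ → S) (H : ℕ → Finset ℕ) (hne : ∀ j, (H j).Nonempty),
      (∀ j j', j < j' → ∀ t ∈ H j, ∀ t' ∈ H j', t < t') ∧
      (∀ (K : Finset ℕ) (hK : K.Nonempty) (hbU : (K.biUnion H).Nonempty),
        ∀ f ∈ F, semigroupProd a K hK * semigroupProd f (K.biUnion H) hbU ∈ C n) := by
  have hmonoC := csetAux_antitone hdec
  -- base state
  obtain ⟨a0, H0, hH0, hmem0⟩ := hJ n F hF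
  let b : CSetAuxT C n F :=
    ⟨a0, H0, hH0, n, H0.max' hH0 + 1,
      fun t ht => Nat.lt_succ_of_le (Finset.le_max' _ _ ht), le_rfl, hmem0⟩
  -- step
  have hstep : ∀ p : CSetAuxT C n F, ∃ q, CSetAuxRel p q := by
    intro p
    have hy : ∀ f ∈ F, ∃ mf, C mf ⊆ {s : S | (p.a * semigroupProd f p.H p.hH) * s ∈ C p.m} :=
      fun f hf => hshift p.m _ (p.hmem f hf)
    choose! φ hφ using hy
    set m₁ : ℕ := max p.m (F.sup φ) with hm₁
    obtain ⟨a', H', hH', hgt, hmem'⟩ := (hJ m₁).beyond F hF p.B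
    refine ⟨⟨a', H', hH', m₁, H'.max' hH' + 1,
      fun t ht => Nat.lt_succ_of_le (Finset.le_max' _ _ ht),
      le_trans p.hnm (le_max_left _ _), hmem'⟩, ?_, ?_, ?_, ?_⟩
    · exact le_max_left _ _
    · have := hgt _ (H'.max'_mem hH')
      show p.B ≤ H'.max' hH' + 1
      omega
    · exact hgt
    · intro f hf s hs
      exact hφ f hf (hmonoC _ _ (le_trans (Finset.le_sup hf) (le_max_right _ _)) hs)
  set Φ := csetAuxChain b hstep with hΦ
  have hrel := csetAuxChain_rel b hstep
  have hmB : Monotone fun j => (Φ j).B := monotone_nat_of_le_succ fun j => (hrel j).2.1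
  have hmm : Monotone fun j => (Φ j).m := monotone_nat_of_le_succ fun j => (hrel j).1
  refine ⟨fun j => (Φ j).a, fun j => (Φ j).H, fun j => (Φ j).hH, ?_, ?_⟩
  · -- increasing blocks
    intro j j' hjj' t ht t' ht'
    obtain ⟨j'', rfl⟩ : ∃ j'', j' = j'' + 1 := ⟨j' - 1, by omega⟩
    have h1 : t < (Φ j).B := (Φ j).hB t ht
    have h2 : (Φ j).B ≤ (Φ j'').B := hmB (by omega)
    have h3 : (Φ j'').B < t' := (hrel j'').2.2.1 t' ht'
    omega
  · -- the product claim
    have claim : ∀ (c : ℕ) (K : Finset ℕ) (hK : K.Nonempty), K.card = c → ∀ f ∈ F,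
        semigroupProd (fun j => (Φ j).a * semigroupProd f (Φ j).H (Φ j).hH) K hK
          ∈ C ((Φ (K.min' hK)).m) := by
      intro c
      induction c using Nat.strong_induction_on with
      | _ c ih =>
        intro K hK hcard f hf
        by_cases hE : (K.erase (K.min' hK)).Nonempty
        · set x := K.min' hK with hx
          set K' := K.erase x with hK'def
          rw [semigroupProd_erase _ K hK (K.min'_mem hK) hE]
          have hcard' : K'.card < c := by
            rw [← hcard, hK'def, Finset.card_erase_of_mem (K.min'_mem hK)]
            have := Finset.card_pos.2 hK
            omega
          have hIH := ih K'.card hcard' K' hE rfl f hf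
          have hxx : x + 1 ≤ K'.min' hE := by
            have h1 : K'.min' hE ∈ K' := K'.min'_mem hE
            have h2 : K'.min' hE ∈ K := Finset.mem_of_mem_erase h1
            have h3 : x ≤ K'.min' hE := Finset.min'_le _ _ h2
            have h4 : K'.min' hE ≠ x := Finset.ne_of_mem_erase h1
            omega
          have hsub : C ((Φ (K'.min' hE)).m) ⊆ C ((Φ (x + 1)).m) :=
            hmonoC _ _ (hmm hxx)
          exact (hrel x).2.2.2 f hf _ (hsub hIH)
        · -- K is a singleton
          have hKsing : K = {K.min' hK} := by
            apply Finset.eq_singleton_iff_unique_mem.2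
            refine ⟨K.min'_mem hK, fun y hy => ?_⟩
            by_contra hne
            exact hE ⟨y, Finset.mem_erase.2 ⟨hne, hy⟩⟩
          obtain ⟨y, hy⟩ : ∃ y, K = {y} := ⟨_, hKsing⟩
          subst hy
          simp only [Finset.min'_singleton]
          rw [semigroupProd_singleton]
          exact (Φ y).hmem f hf
    intro K hK hbU f hf
    have hdisj : (K : Set ℕ).PairwiseDisjoint fun j => (Φ j).H := by
      intro j hj j' hj' hne
      rcases Nat.lt_or_ge j j' with h | h
      · rw [Function.onFun, Finset.disjoint_left]
        intro t ht ht'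
        have h1 : t < (Φ j).B := (Φ j).hB t ht
        obtain ⟨j'', rfl⟩ : ∃ j'', j' = j'' + 1 := ⟨j' - 1, by omega⟩
        have h2 : (Φ j).B ≤ (Φ j'').B := hmB (by omega)
        have h3 : (Φ j'').B < t := (hrel j'').2.2.1 t ht'
        omega
      · have hlt : j' < j := by omega
        rw [Function.onFun, Finset.disjoint_right]
        intro t ht ht'
        have h1 : t < (Φ j').B := (Φ j').hB t ht
        obtain ⟨j'', rfl⟩ : ∃ j'', j = j'' + 1 := ⟨j - 1, by omega⟩
        have h2 : (Φ j').B ≤ (Φ j'').B := hmB (by omega)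
        have h3 : (Φ j'').B < t := (hrel j'').2.2.1 t ht'
        omega
    rw [semigroupProd_biUnion f K hK _ (fun j => (Φ j).hH) hdisj hbU,
      ← semigroupProd_mul]
    have := claim K.card K hK rfl f hf
    exact hmonoC n _ (le_trans (Φ (K.min' hK)).hnm le_rfl) this

end Chain


section ProdComp
variable {S₁ S₂ : Type*} [CommSemigroup S₁] [CommSemigroup S₂]

lemma csetAux_foldl_fst (f : ℕ → S₁ × S₂) (l : List ℕ) (x : S₁ × S₂) :
    (l.foldl (fun x t => x * f t) x).1 = l.foldl (fun y t => y * (f t).1) x.1 := by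
  induction l generalizing x with
  | nil => rfl
  | cons a t ih => simp [ih]

lemma csetAux_foldl_snd (f : ℕ → S₁ × S₂) (l : List ℕ) (x : S₁ × S₂) :
    (l.foldl (fun x t => x * f t) x).2 = l.foldl (fun y t => y * (f t).2) x.2 := by
  induction l generalizing x with
  | nil => rfl
  | cons a t ih => simp [ih]

lemma semigroupProd_fst (f : ℕ → S₁ × S₂) (H : Finset ℕ) (hH : H.Nonempty) :
    (semigroupProd f H hH).1 = semigroupProd (fun t => (f t).1) H hH := by
  simp only [semigroupProd, csetAux_foldl_fst]

lemma semigroupProd_snd (f : ℕ → S₁ × S₂) (H : Finset ℕ) (hH : H.Nonempty) :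
    (semigroupProd f H hH).2 = semigroupProd (fun t => (f t).2) H hH := by
  simp only [semigroupProd, csetAux_foldl_snd]

end ProdComp

theorem cset_prod {S₁ S₂ : Type*} [CommSemigroup S₁] [CommSemigroup S₂]
    [Countable S₁] [Countable S₂]
    {A : Set S₁} {B : Set S₂} (hA : IsCSet A) (hB : IsCSet B) :
    IsCSet (A ×ˢ B) := by
  classical
  obtain ⟨C, hCA, hCdec, hCshift, hCJ⟩ := hA
  obtain ⟨D, hDB, hDdec, hDshift, hDJ⟩ := hB
  have hmonoC := csetAux_antitone hCdec
  have hmonoD := csetAux_antitone hDdec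
  refine ⟨fun n => (C n) ×ˢ (D n), ?_, ?_, ?_, ?_⟩
  · intro n
    exact Set.prod_mono (hCA n) (hDB n)
  · intro n
    exact Set.prod_mono (hCdec n) (hDdec n)
  · rintro n ⟨x₁, x₂⟩ hx
    obtain ⟨hx₁, hx₂⟩ := hx
    obtain ⟨m₁, hm₁⟩ := hCshift n x₁ hx₁
    obtain ⟨m₂, hm₂⟩ := hDshift n x₂ hx₂
    refine ⟨max m₁ m₂, ?_⟩
    rintro ⟨s₁, s₂⟩ ⟨hs₁, hs₂⟩
    exact ⟨hm₁ (hmonoC _ _ (le_max_left _ _) hs₁), hm₂ (hmonoD _ _ (le_max_right _ _) hs₂)⟩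
  · intro n F hF
    obtain ⟨a, H, hne, hinc, hprod⟩ :=
      cset_star C hCdec hCshift hCJ n (F.image fun f => fun t => (f t).1) (hF.image _)
    obtain ⟨b, K, hK, hb⟩ :=
      hDJ n (F.image fun f => fun j => semigroupProd (fun t => (f t).2) (H j) (hne j))
        (hF.image _)
    have hbU : (K.biUnion H).Nonempty :=
      ⟨(H (K.min' hK)).min' (hne _),
        Finset.mem_biUnion.2 ⟨K.min' hK, K.min'_mem hK, Finset.min'_mem _ _⟩⟩
    refine ⟨(semigroupProd a K hK, b), K.biUnion H, hbU, ?_⟩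
    intro f hf
    have hdisj : (K : Set ℕ).PairwiseDisjoint H := by
      intro j hj j' hj' hnejj
      rcases Nat.lt_or_ge j j' with h | h
      · rw [Function.onFun, Finset.disjoint_left]
        intro t ht ht'
        exact absurd (hinc j j' h t ht t ht') (lt_irrefl t)
      · have hlt : j' < j := by omega
        rw [Function.onFun, Finset.disjoint_right]
        intro t ht ht'
        exact absurd (hinc j' j hlt t ht t ht') (lt_irrefl t)
    constructor
    · show ((semigroupProd a K hK, b) * semigroupProd f (K.biUnion H) hbU).1 ∈ C n
      have h1 : ((semigroupProd a K hK, b) * semigroupProd f (K.biUnion H) hbU).1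
          = semigroupProd a K hK * semigroupProd (fun t => (f t).1) (K.biUnion H) hbU := by
        rw [Prod.fst_mul, semigroupProd_fst]
      rw [h1]
      exact hprod K hK hbU _ (Finset.mem_image_of_mem _ hf)
    · show ((semigroupProd a K hK, b) * semigroupProd f (K.biUnion H) hbU).2 ∈ D n
      have h2 : ((semigroupProd a K hK, b) * semigroupProd f (K.biUnion H) hbU).2
          = b * semigroupProd (fun t => (f t).2) (K.biUnion H) hbU := by
        rw [Prod.snd_mul, semigroupProd_snd]
      rw [h2, semigroupProd_biUnion _ K hK H hne hdisj hbU]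
      exact hb _ (Finset.mem_image_of_mem _ hf)
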